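/- Let A, B, C be Young functions such that A⁻¹(t)·B⁻¹(t) ≤ c₁·C⁻¹(t) for all t ≥ t₀ > 0. Then there is a constant c₂ such that for all cubes Q and measurable f, g: ‖fg‖_{C,Q} ≤ c₂ ‖f‖_{A,Q} ‖g‖_{B,Q}. -/

import Mathlib

open Set Filter MeasureTheory
open scoped ENNReal

noncomputable section

/-- A Young function. -/
def IsYoung (Φ : ℝ → ℝ) : Prop :=
  ContinuousOn Φ (Set.Ici 0) ∧ ConvexOn ℝ (Set.Ici 0) Φ ∧
  StrictMonoOn Φ (Set.Ici 0) ∧ (∀ t ∈ Set.Ici (0:ℝ), 0 ≤ Φ t) ∧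
  Filter.Tendsto (fun t => Φ t / t) (nhdsWithin 0 (Set.Ioi 0)) (nhds 0) ∧
  Filter.Tendsto (fun t => Φ t / t) Filter.atTop Filter.atTop

/-- Extension of a Young function to `ℝ≥0∞`. -/
def eOrl (Φ : ℝ → ℝ) (z : ℝ≥0∞) : ℝ≥0∞ :=
  if z = ⊤ then ⊤ else ENNReal.ofReal (Φ z.toReal)

/-- The normalized Luxemburg norm `‖F‖_{Φ,s} = inf{λ > 0 : ⨍_s Φ(F/λ) ≤ 1}`. -/
def luxNorm {n : ℕ} (Φ : ℝ → ℝ) (s : Set (Fin n → ℝ)) (F : (Fin n → ℝ) → ℝ≥0∞) : ℝ≥0∞ :=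
  sInf {l : ℝ≥0∞ | ∃ lam : ℝ, 0 < lam ∧ l = ENNReal.ofReal lam ∧
    (∫⁻ x in s, eOrl Φ (F x / ENNReal.ofReal lam)) ≤ volume s}

lemma young_zero {Φ : ℝ → ℝ} (hΦ : IsYoung Φ) : Φ 0 = 0 := by
  obtain ⟨hcont, hconv, hmono, hnn, h0, htop⟩ := hΦ
  by_contra hne
  have hpos : 0 < Φ 0 := lt_of_le_of_ne (hnn 0 (Set.mem_Ici.2 le_rfl)) (Ne.symm hne)
  have h1 : ∀ᶠ t in nhdsWithin (0:ℝ) (Set.Ioi 0), Φ t / t < Φ 0 :=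
    h0.eventually_lt_const hpos
  have h2 : ∀ᶠ t in nhdsWithin (0:ℝ) (Set.Ioi 0), t < 1 :=
    eventually_nhdsWithin_of_eventually_nhds (eventually_lt_nhds one_pos)
  have h3 : ∀ᶠ t in nhdsWithin (0:ℝ) (Set.Ioi 0), t ∈ Set.Ioi (0:ℝ) :=
    eventually_mem_nhdsWithin
  obtain ⟨t, ht1, ht2, ht3⟩ := (h1.and (h2.and h3)).exists
  have ht : (0:ℝ) < t := ht3
  have hΦt : Φ 0 < Φ t := hmono (Set.mem_Ici.2 le_rfl) (Set.mem_Ici.2 ht.le) ht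
  have : Φ 0 * t < Φ t := by nlinarith
  have : Φ 0 < Φ t / t := (lt_div_iff₀ ht).2 (by linarith [mul_comm (Φ 0) t])
  linarith [ht1]

lemma young_top {Φ : ℝ → ℝ} (hΦ : IsYoung Φ) : Tendsto Φ atTop atTop := by
  have h := hΦ.2.2.2.2.2
  have hev : ∀ᶠ t in atTop, t ≤ Φ t := by
    filter_upwards [h.eventually_ge_atTop 1, eventually_ge_atTop (1:ℝ)] with t h1 h2
    have ht : (0:ℝ) < t := by linarith
    calc t = 1 * t := (one_mul t).symm
      _ ≤ (Φ t / t) * t := by nlinarith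
      _ = Φ t := by field_simp
  exact tendsto_atTop_mono' _ hev tendsto_id

lemma young_div {Φ : ℝ → ℝ} (hΦ : IsYoung Φ) {k z : ℝ} (hk : 1 ≤ k) (hz : 0 ≤ z) :
    Φ (z / k) ≤ Φ z / k := by
  have hk0 : (0:ℝ) < k := lt_of_lt_of_le one_pos hk
  have h0 := young_zero hΦ
  have hconv := hΦ.2.1.2
  have ha : (0:ℝ) ≤ 1 / k := by positivity
  have hb : (0:ℝ) ≤ 1 - 1 / k := by
    have : 1 / k ≤ 1 := by rw [div_le_one hk0]; exact hk
    linarith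
  have hab : 1 / k + (1 - 1 / k) = 1 := by ring
  have := hconv (Set.mem_Ici.2 hz) (Set.mem_Ici.2 (le_refl (0:ℝ))) ha hb hab
  simp only [smul_eq_mul, mul_zero, add_zero, h0] at this
  calc Φ (z / k) = Φ (1 / k * z) := by rw [one_div, inv_mul_eq_div]
    _ ≤ 1 / k * Φ z := this
    _ = Φ z / k := by rw [one_div, inv_mul_eq_div]

lemma eOrl_ofReal (Φ : ℝ → ℝ) {a lam : ℝ} (ha : 0 ≤ a) (hlam : 0 < lam) :
    eOrl Φ (ENNReal.ofReal a / ENNReal.ofReal lam) = ENNReal.ofReal (Φ (a / lam)) := by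
  have hne : ENNReal.ofReal a / ENNReal.ofReal lam ≠ ⊤ := by
    simp [ENNReal.div_eq_top, ENNReal.ofReal_ne_top, (ENNReal.ofReal_pos.2 hlam).ne']
  rw [eOrl, if_neg hne, ENNReal.toReal_div, ENNReal.toReal_ofReal ha,
      ENNReal.toReal_ofReal hlam.le]

lemma lux_eq_zero_of_ae {n : ℕ} {Φ : ℝ → ℝ} (hΦ0 : Φ 0 = 0) {s : Set (Fin n → ℝ)}
    {F : (Fin n → ℝ) → ℝ≥0∞} (hF : ∀ᵐ x ∂(volume.restrict s), F x = 0) :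
    luxNorm Φ s F = 0 := by
  have hmem : ∀ lam : ℝ, 0 < lam → ENNReal.ofReal lam ∈
      {l : ℝ≥0∞ | ∃ lam : ℝ, 0 < lam ∧ l = ENNReal.ofReal lam ∧
        (∫⁻ x in s, eOrl Φ (F x / ENNReal.ofReal lam)) ≤ volume s} := by
    intro lam hlam
    refine ⟨lam, hlam, rfl, ?_⟩
    have : (∫⁻ x in s, eOrl Φ (F x / ENNReal.ofReal lam)) = 0 := by
      rw [← lintegral_zero (μ := volume.restrict s)]
      refine lintegral_congr_ae (hF.mono fun x hx => ?_)
      simp only []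
      rw [hx, ENNReal.zero_div, eOrl, if_neg (by simp), ENNReal.toReal_zero, hΦ0,
        ENNReal.ofReal_zero]
    rw [this]; exact zero_le
  refine le_antisymm ?_ (zero_le)
  refine ENNReal.le_of_forall_pos_le_add fun ε hε _ => ?_
  rw [zero_add]
  calc luxNorm Φ s F ≤ ENNReal.ofReal (ε : ℝ) := sInf_le (hmem ε (by exact_mod_cast hε))
    _ = (ε : ℝ≥0∞) := ENNReal.ofReal_coe_nnreal

lemma zero_of_lux_zero {n : ℕ} {Φ : ℝ → ℝ} (hΦ : IsYoung Φ) {s : Set (Fin n → ℝ)}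
    (hs : volume s ≠ ⊤) {f : (Fin n → ℝ) → ℝ} (hf : Measurable f)
    (h : luxNorm Φ s (fun x => ENNReal.ofReal |f x|) = 0) :
    ∀ᵐ x ∂(volume.restrict s), f x = 0 := by
  set μ := volume.restrict s with hμ
  by_contra hcon
  rw [ae_iff] at hcon
  -- find δ > 0 with μ {x | δ ≤ |f x|} ≠ 0
  have hsub : {x | ¬ f x = 0} ⊆ ⋃ m : ℕ, {x | 1 / (m + 1 : ℝ) ≤ |f x|} := by
    intro x hx
    have : 0 < |f x| := abs_pos.2 hx
    obtain ⟨m, hm⟩ := exists_nat_one_div_lt this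
    exact Set.mem_iUnion.2 ⟨m, le_of_lt hm⟩
  have : ∃ m : ℕ, μ {x | 1 / (m + 1 : ℝ) ≤ |f x|} ≠ 0 := by
    by_contra hall
    push_neg at hall
    exact hcon (measure_mono_null hsub (measure_iUnion_null hall))
  obtain ⟨m, hm⟩ := this
  set δ : ℝ := 1 / (m + 1 : ℝ) with hδdef
  have hδ : 0 < δ := by positivity
  set S : Set (Fin n → ℝ) := {x | δ ≤ |f x|} with hSdef
  have hSmeas : MeasurableSet S := measurableSet_le measurable_const hf.abs
  have hmS_ne_top : μ S ≠ ⊤ := by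
    refine ne_top_of_le_ne_top ?_ (measure_mono (Set.subset_univ S))
    rw [hμ, Measure.restrict_apply_univ]; exact hs
  -- choose K with volume s < K * μ S
  set K : ℝ := (volume s / μ S).toReal + 1 with hKdef
  have hdivne : volume s / μ S ≠ ⊤ := by
    exact (ENNReal.div_lt_top hs hm).ne
  have hK : volume s / μ S < ENNReal.ofReal K := by
    rw [ENNReal.lt_ofReal_iff_toReal_lt hdivne]
    simp [hKdef]
  have hKm : volume s < ENNReal.ofReal K * μ S := by
    rw [ENNReal.div_lt_iff (Or.inl hm) (Or.inr hs)] at hK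
    exact hK
  -- Φ eventually ≥ K
  obtain ⟨T, hT⟩ := eventually_atTop.1 ((young_top hΦ).eventually_ge_atTop K)
  set T' : ℝ := max T 1 with hT'def
  have hT'pos : (0:ℝ) < T' := lt_of_lt_of_le one_pos (le_max_right _ _)
  set lam₀ : ℝ := δ / T' with hlam₀def
  have hlam₀ : 0 < lam₀ := by positivity
  -- extract small lam from luxNorm = 0
  have hlt : luxNorm Φ s (fun x => ENNReal.ofReal |f x|) < ENNReal.ofReal lam₀ := by
    rw [h]; exact ENNReal.ofReal_pos.2 hlam₀
  obtain ⟨l, hl, hllt⟩ := sInf_lt_iff.1 hlt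
  obtain ⟨lam, hlam, rfl, hint⟩ := hl
  have hlamlt : lam < lam₀ := (ENNReal.ofReal_lt_ofReal_iff hlam₀).1 hllt
  have hTle : T' ≤ δ / lam := by
    rw [le_div_iff₀ hlam]
    have := (lt_div_iff₀ hT'pos).1 (hlam₀def ▸ hlamlt)
    linarith [mul_comm T' lam]
  have hKΦ : K ≤ Φ (δ / lam) := hT (δ / lam) (le_trans (le_max_left _ _) hTle)
  -- lower bound the integral
  have hpt : ∀ x ∈ S, ENNReal.ofReal K ≤ eOrl Φ (ENNReal.ofReal |f x| / ENNReal.ofReal lam) := by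
    intro x hx
    rw [eOrl_ofReal Φ (abs_nonneg _) hlam]
    refine ENNReal.ofReal_le_ofReal (le_trans hKΦ ?_)
    have h1 : δ / lam ≤ |f x| / lam := by gcongr; exact hx
    exact hΦ.2.2.1.monotoneOn (Set.mem_Ici.2 (by positivity)) (Set.mem_Ici.2 (le_trans (by positivity : (0:ℝ) ≤ δ / lam) h1)) h1
  have hlow : ENNReal.ofReal K * μ S ≤
      ∫⁻ x in s, eOrl Φ (ENNReal.ofReal |f x| / ENNReal.ofReal lam) := by
    calc ENNReal.ofReal K * μ S = ∫⁻ _ in S, ENNReal.ofReal K ∂μ := (setLIntegral_const S _).symm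
      _ ≤ ∫⁻ x in S, eOrl Φ (ENNReal.ofReal |f x| / ENNReal.ofReal lam) ∂μ :=
          setLIntegral_mono' hSmeas hpt
      _ ≤ ∫⁻ x, eOrl Φ (ENNReal.ofReal |f x| / ENNReal.ofReal lam) ∂μ :=
          lintegral_mono' Measure.restrict_le_self le_rfl
  exact absurd (le_trans hlow hint) (not_le.2 hKm)


/-- **Hölder inequality for three Young functions:** if `A⁻¹(t)·B⁻¹(t) ≤ c₁·C⁻¹(t)`
for all `t ≥ t₀ > 0`, then `‖fg‖_{C,Q} ≤ c₂ ‖f‖_{A,Q} ‖g‖_{B,Q}` for all cubes `Q`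
(closed balls in sup norm) and measurable `f, g`. -/
theorem stmt_13 (A B C : ℝ → ℝ) (Ainv Binv Cinv : ℝ → ℝ)
    (hA : IsYoung A) (hB : IsYoung B) (hC : IsYoung C)
    (hAinv : ∀ t ∈ Set.Ici (0:ℝ), A (Ainv t) = t ∧ Ainv (A t) = t ∧ 0 ≤ Ainv t)
    (hBinv : ∀ t ∈ Set.Ici (0:ℝ), B (Binv t) = t ∧ Binv (B t) = t ∧ 0 ≤ Binv t)
    (hCinv : ∀ t ∈ Set.Ici (0:ℝ), C (Cinv t) = t ∧ Cinv (C t) = t ∧ 0 ≤ Cinv t)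
    (c₁ t₀ : ℝ) (hc₁ : 0 < c₁) (ht₀ : 0 < t₀)
    (h : ∀ t ≥ t₀, Ainv t * Binv t ≤ c₁ * Cinv t) :
    ∃ c₂ : ℝ, 0 < c₂ ∧
      ∀ (n : ℕ) (cc : Fin n → ℝ) (r : ℝ), 0 < r →
      ∀ f g : (Fin n → ℝ) → ℝ, Measurable f → Measurable g →
        luxNorm C (Metric.closedBall cc r) (fun x => ENNReal.ofReal |f x * g x|) ≤
          ENNReal.ofReal c₂ *
            luxNorm A (Metric.closedBall cc r) (fun x => ENNReal.ofReal |f x|) *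
            luxNorm B (Metric.closedBall cc r) (fun x => ENNReal.ofReal |g x|) := by
  classical
  set k : ℝ := 2 + t₀ with hkdef
  have hk1 : (1:ℝ) ≤ k := by simp only [hkdef]; linarith
  have hk0 : (0:ℝ) < k := by linarith
  have hc₂ : (0:ℝ) < k * c₁ := by positivity
  refine ⟨k * c₁, hc₂, ?_⟩
  intro n cc r hr f g hf hg
  set Q := Metric.closedBall cc r with hQdef
  have hQtop : volume Q ≠ ⊤ := (isCompact_closedBall cc r).measure_lt_top.ne
  -- pointwise key inequality
  have key : ∀ u v : ℝ, 0 ≤ u → 0 ≤ v → C (u * v / c₁) ≤ A u + B v + t₀ := by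
    intro u v hu hv
    set t : ℝ := max (max (A u) (B v)) t₀ with htdef
    have ht : t₀ ≤ t := le_max_right _ _
    have ht0 : (0:ℝ) ≤ t := le_trans ht₀.le ht
    have hAu : A u ≤ t := le_trans (le_max_left _ _) (le_max_left _ _)
    have hBv : B v ≤ t := le_trans (le_max_right _ _) (le_max_left _ _)
    obtain ⟨hA1, hA2, hA3⟩ := hAinv t (Set.mem_Ici.2 ht0)
    obtain ⟨hB1, hB2, hB3⟩ := hBinv t (Set.mem_Ici.2 ht0)
    obtain ⟨hC1, hC2, hC3⟩ := hCinv t (Set.mem_Ici.2 ht0)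
    have hu' : u ≤ Ainv t := by
      by_contra hcon
      push_neg at hcon
      have := hA.2.2.1 (Set.mem_Ici.2 hA3) (Set.mem_Ici.2 hu) hcon
      rw [hA1] at this; linarith
    have hv' : v ≤ Binv t := by
      by_contra hcon
      push_neg at hcon
      have := hB.2.2.1 (Set.mem_Ici.2 hB3) (Set.mem_Ici.2 hv) hcon
      rw [hB1] at this; linarith
    have huv : u * v ≤ c₁ * Cinv t :=
      le_trans (mul_le_mul hu' hv' hv hA3) (h t ht)
    have hdiv : u * v / c₁ ≤ Cinv t := by
      rw [div_le_iff₀ hc₁]; linarith [mul_comm (Cinv t) c₁]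
    have hCm : C (u * v / c₁) ≤ C (Cinv t) :=
      hC.2.2.1.monotoneOn (Set.mem_Ici.2 (by positivity)) (Set.mem_Ici.2 hC3) hdiv
    rw [hC1] at hCm
    have hAnn : 0 ≤ A u := hA.2.2.2.1 u (Set.mem_Ici.2 hu)
    have hBnn : 0 ≤ B v := hB.2.2.2.1 v (Set.mem_Ici.2 hv)
    have : t ≤ A u + B v + t₀ := by
      simp only [htdef, max_le_iff]; refine ⟨⟨by linarith, by linarith⟩, by linarith⟩
    linarith
  -- membership lemma for the product
  have hmem : ∀ lamA lamB : ℝ, 0 < lamA → 0 < lamB →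
      (∫⁻ x in Q, eOrl A (ENNReal.ofReal |f x| / ENNReal.ofReal lamA)) ≤ volume Q →
      (∫⁻ x in Q, eOrl B (ENNReal.ofReal |g x| / ENNReal.ofReal lamB)) ≤ volume Q →
      (∫⁻ x in Q, eOrl C (ENNReal.ofReal |f x * g x| /
        ENNReal.ofReal (k * c₁ * lamA * lamB))) ≤ volume Q := by
    intro lamA lamB hlA hlB hIA hIB
    set lam : ℝ := k * c₁ * lamA * lamB with hlamdef
    have hlam0 : 0 < lam := by positivity
    have contA : Continuous fun t : ℝ => A (max t 0) :=
      hA.1.comp_continuous (continuous_id.max continuous_const)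
        (fun x => Set.mem_Ici.2 (le_max_right x 0))
    have contB : Continuous fun t : ℝ => B (max t 0) :=
      hB.1.comp_continuous (continuous_id.max continuous_const)
        (fun x => Set.mem_Ici.2 (le_max_right x 0))
    have mA : Measurable fun x => ENNReal.ofReal (A (max (|f x| / lamA) 0)) :=
      ENNReal.measurable_ofReal.comp (contA.measurable.comp (hf.abs.div_const lamA))
    have mB : Measurable fun x => ENNReal.ofReal (B (max (|g x| / lamB) 0)) :=
      ENNReal.measurable_ofReal.comp (contB.measurable.comp (hg.abs.div_const lamB))
    have eqA : (∫⁻ x in Q, ENNReal.ofReal (A (max (|f x| / lamA) 0))) ≤ volume Q := by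
      refine le_trans (le_of_eq (lintegral_congr fun x => ?_)) hIA
      rw [eOrl_ofReal A (abs_nonneg _) hlA, max_eq_left (by positivity)]
    have eqB : (∫⁻ x in Q, ENNReal.ofReal (B (max (|g x| / lamB) 0))) ≤ volume Q := by
      refine le_trans (le_of_eq (lintegral_congr fun x => ?_)) hIB
      rw [eOrl_ofReal B (abs_nonneg _) hlB, max_eq_left (by positivity)]
    have point : ∀ x : Fin n → ℝ,
        C (|f x * g x| / lam) ≤ 1 / k * (A (max (|f x| / lamA) 0) + B (max (|g x| / lamB) 0) + t₀) := by
      intro x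
      set u : ℝ := |f x| / lamA with hudef
      set v : ℝ := |g x| / lamB with hvdef
      have hu : 0 ≤ u := by positivity
      have hv : 0 ≤ v := by positivity
      have harg : |f x * g x| / lam = u * v / c₁ / k := by
        simp only [hudef, hvdef, hlamdef, abs_mul]
        field_simp
      rw [harg, max_eq_left hu, max_eq_left hv]
      calc C (u * v / c₁ / k) ≤ C (u * v / c₁) / k := young_div hC hk1 (by positivity)
        _ ≤ (A u + B v + t₀) / k := by gcongr; exact key u v hu hv
        _ = 1 / k * (A u + B v + t₀) := by ring
    calc (∫⁻ x in Q, eOrl C (ENNReal.ofReal |f x * g x| / ENNReal.ofReal lam))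
        = ∫⁻ x in Q, ENNReal.ofReal (C (|f x * g x| / lam)) :=
          lintegral_congr fun x => eOrl_ofReal C (abs_nonneg _) hlam0
      _ ≤ ∫⁻ x in Q, ENNReal.ofReal (1 / k) *
            (ENNReal.ofReal (A (max (|f x| / lamA) 0)) +
             ENNReal.ofReal (B (max (|g x| / lamB) 0)) + ENNReal.ofReal t₀) := by
          refine lintegral_mono fun x => ?_
          have h1 := point x
          have hAnn : 0 ≤ A (max (|f x| / lamA) 0) :=
            hA.2.2.2.1 _ (Set.mem_Ici.2 (le_max_right _ _))
          have hBnn : 0 ≤ B (max (|g x| / lamB) 0) :=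
            hB.2.2.2.1 _ (Set.mem_Ici.2 (le_max_right _ _))
          calc ENNReal.ofReal (C (|f x * g x| / lam))
              ≤ ENNReal.ofReal (1 / k * (A (max (|f x| / lamA) 0) +
                  B (max (|g x| / lamB) 0) + t₀)) := ENNReal.ofReal_le_ofReal h1
            _ = _ := by
                rw [ENNReal.ofReal_mul (by positivity),
                    ENNReal.ofReal_add (by positivity) ht₀.le,
                    ENNReal.ofReal_add hAnn hBnn]
      _ = ENNReal.ofReal (1 / k) * ∫⁻ x in Q,
            (ENNReal.ofReal (A (max (|f x| / lamA) 0)) +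
             ENNReal.ofReal (B (max (|g x| / lamB) 0)) + ENNReal.ofReal t₀) :=
          lintegral_const_mul' _ _ ENNReal.ofReal_ne_top
      _ = ENNReal.ofReal (1 / k) *
            ((∫⁻ x in Q, ENNReal.ofReal (A (max (|f x| / lamA) 0))) +
             (∫⁻ x in Q, ENNReal.ofReal (B (max (|g x| / lamB) 0))) +
             ENNReal.ofReal t₀ * volume Q) := by
          rw [lintegral_add_right _ measurable_const, lintegral_add_right _ mB,
              setLIntegral_const]
      _ ≤ ENNReal.ofReal (1 / k) *
            (volume Q + volume Q + ENNReal.ofReal t₀ * volume Q) := by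
          gcongr
      _ = ENNReal.ofReal (1 / k) * (ENNReal.ofReal k * volume Q) := by
          have h2 : (volume Q + volume Q + ENNReal.ofReal t₀ * volume Q)
              = (1 + 1 + ENNReal.ofReal t₀) * volume Q := by ring
          rw [h2]
          congr 1
          rw [hkdef, ENNReal.ofReal_add (by norm_num) ht₀.le]
          norm_num
      _ = volume Q := by
          rw [← mul_assoc, ← ENNReal.ofReal_mul (by positivity),
              one_div_mul_cancel hk0.ne', ENNReal.ofReal_one, one_mul]
  -- assemble
  set SA := {l : ℝ≥0∞ | ∃ lam : ℝ, 0 < lam ∧ l = ENNReal.ofReal lam ∧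
    (∫⁻ x in Q, eOrl A ((fun x => ENNReal.ofReal |f x|) x / ENNReal.ofReal lam)) ≤ volume Q}
    with hSAdef
  set SB := {l : ℝ≥0∞ | ∃ lam : ℝ, 0 < lam ∧ l = ENNReal.ofReal lam ∧
    (∫⁻ x in Q, eOrl B ((fun x => ENNReal.ofReal |g x|) x / ENNReal.ofReal lam)) ≤ volume Q}
    with hSBdef
  have hNA : luxNorm A Q (fun x => ENNReal.ofReal |f x|) = sInf SA := rfl
  have hNB : luxNorm B Q (fun x => ENNReal.ofReal |g x|) = sInf SB := rfl
  by_cases hA0 : luxNorm A Q (fun x => ENNReal.ofReal |f x|) = 0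
  · have hf0 := zero_of_lux_zero hA hQtop hf hA0
    have hC0 : luxNorm C Q (fun x => ENNReal.ofReal |f x * g x|) = 0 :=
      lux_eq_zero_of_ae (young_zero hC) (hf0.mono fun x hx => by simp [hx])
    rw [hC0]; exact zero_le
  by_cases hB0 : luxNorm B Q (fun x => ENNReal.ofReal |g x|) = 0
  · have hg0 := zero_of_lux_zero hB hQtop hg hB0
    have hC0 : luxNorm C Q (fun x => ENNReal.ofReal |f x * g x|) = 0 :=
      lux_eq_zero_of_ae (young_zero hC) (hg0.mono fun x hx => by simp [hx])
    rw [hC0]; exact zero_le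
  have hcne0 : ENNReal.ofReal (k * c₁) ≠ 0 := (ENNReal.ofReal_pos.2 hc₂).ne'
  by_cases hSAne : SA.Nonempty
  · by_cases hSBne : SB.Nonempty
    · -- main case
      have hstep : ∀ a ∈ SA, ∀ b ∈ SB,
          luxNorm C Q (fun x => ENNReal.ofReal |f x * g x|) ≤
            ENNReal.ofReal (k * c₁) * a * b := by
        rintro a ⟨lamA, hlA, rfl, hIA⟩ b ⟨lamB, hlB, rfl, hIB⟩
        have hint := hmem lamA lamB hlA hlB hIA hIB
        have hm : ENNReal.ofReal (k * c₁ * lamA * lamB) ∈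
            {l : ℝ≥0∞ | ∃ lam : ℝ, 0 < lam ∧ l = ENNReal.ofReal lam ∧
              (∫⁻ x in Q, eOrl C ((fun x => ENNReal.ofReal |f x * g x|) x /
                ENNReal.ofReal lam)) ≤ volume Q} :=
          ⟨k * c₁ * lamA * lamB, by positivity, rfl, hint⟩
        calc luxNorm C Q (fun x => ENNReal.ofReal |f x * g x|)
            ≤ ENNReal.ofReal (k * c₁ * lamA * lamB) := sInf_le hm
          _ = ENNReal.ofReal (k * c₁) * ENNReal.ofReal lamA * ENNReal.ofReal lamB := by
              rw [ENNReal.ofReal_mul (by positivity), ENNReal.ofReal_mul (by positivity)]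
      haveI : Nonempty SA := hSAne.to_subtype
      haveI : Nonempty SB := hSBne.to_subtype
      obtain ⟨a₀, ha₀⟩ := hSAne
      obtain ⟨b₀, hb₀⟩ := hSBne
      have ha₀top : a₀ ≠ ⊤ := by
        obtain ⟨lam, _, rfl, _⟩ := ha₀; exact ENNReal.ofReal_ne_top
      have hb₀top : b₀ ≠ ⊤ := by
        obtain ⟨lam, _, rfl, _⟩ := hb₀; exact ENNReal.ofReal_ne_top
      have hle : luxNorm C Q (fun x => ENNReal.ofReal |f x * g x|) ≤
          (⨅ a : SA, ENNReal.ofReal (k * c₁) * (a : ℝ≥0∞)) * ⨅ b : SB, (b : ℝ≥0∞) := by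
        refine ENNReal.le_iInf_mul_iInf ⟨⟨a₀, ha₀⟩, ?_⟩ ⟨⟨b₀, hb₀⟩, hb₀top⟩
          fun a b => hstep a a.2 b b.2
        exact ENNReal.mul_ne_top ENNReal.ofReal_ne_top ha₀top
      rw [← ENNReal.mul_iInf_of_ne hcne0 ENNReal.ofReal_ne_top, ← sInf_eq_iInf',
          ← sInf_eq_iInf'] at hle
      rw [hNA, hNB]
      exact hle
    · -- SB empty
      have : sInf SB = ⊤ := by
        rw [Set.not_nonempty_iff_eq_empty] at hSBne
        rw [hSBne, sInf_empty]
      rw [hNA, hNB, this, ENNReal.mul_top (mul_ne_zero hcne0 (hNA ▸ hA0))]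
      exact le_top
  · -- SA empty
    have : sInf SA = ⊤ := by
      rw [Set.not_nonempty_iff_eq_empty] at hSAne
      rw [hSAne, sInf_empty]
    rw [hNA, this, ENNReal.mul_top hcne0, ENNReal.top_mul (hNB ▸ hB0)]
    exact le_top
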